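/- In misère Partizan Kayles, a position consisting of k strips of length 1 and j strips of length 2 with k > j has outcome R: Right wins regardless of who moves first. -/
import Mathlib


/-- Add a strip of length `k` to a position (strips of length 0 are discarded). -/
def addStrip (m : Multiset ℕ) (k : ℕ) : Multiset ℕ := if k = 0 then m else k ::ₘ m

/-- Left removes one square from a strip of length `n ≥ 1`, leaving strips `i` and `n-1-i`. -/
def LeftMove (G G' : Multiset ℕ) : Prop :=
  ∃ n ∈ G, ∃ i, i + 1 ≤ n ∧ G' = addStrip (addStrip (G.erase n) i) (n - 1 - i)

/-- Right removes two adjacent squares from a strip of length `n ≥ 2`, leaving `i` and `n-2-i`. -/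
def RightMove (G G' : Multiset ℕ) : Prop :=
  ∃ n ∈ G, ∃ i, i + 2 ≤ n ∧ G' = addStrip (addStrip (G.erase n) i) (n - 2 - i)

mutual
  /-- Misère play: Left, to move, wins (a player unable to move wins). -/
  inductive LeftWinsMover : Multiset ℕ → Prop
    | cannot (G : Multiset ℕ) : (¬ ∃ G', LeftMove G G') → LeftWinsMover G
    | move (G G' : Multiset ℕ) : LeftMove G G' → LeftWinsWaiter G' → LeftWinsMover G
  /-- Misère play: Left wins with Right to move. -/
  inductive LeftWinsWaiter : Multiset ℕ → Prop
    | intro (G : Multiset ℕ) : (∃ G', RightMove G G') →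
        (∀ G', RightMove G G' → LeftWinsMover G') → LeftWinsWaiter G
end

inductive Outcome | L | N | P | R
  deriving DecidableEq

open Classical in
/-- The misère outcome `o⁻(G)`. -/
noncomputable def outcome (G : Multiset ℕ) : Outcome :=
  if LeftWinsMover G then (if LeftWinsWaiter G then Outcome.L else Outcome.N)
  else (if LeftWinsWaiter G then Outcome.P else Outcome.R)

/-- The partial order on outcomes: `L` greatest, `R` least, `N` and `P` incomparable. -/
def Outcome.le (a b : Outcome) : Prop := a = b ∨ a = Outcome.R ∨ b = Outcome.L

/-- `pos k j` is the position `kS₁ + jS₂`. -/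
def pos (k j : ℕ) : Multiset ℕ := Multiset.replicate k 1 + Multiset.replicate j 2

lemma addStrip_zero (m : Multiset ℕ) : addStrip m 0 = m := rfl
lemma addStrip_one (m : Multiset ℕ) : addStrip m 1 = 1 ::ₘ m := rfl

lemma pos_succ_left (k j : ℕ) : pos (k+1) j = 1 ::ₘ pos k j := by
  simp [pos, Multiset.replicate_succ, Multiset.cons_add]

lemma pos_succ_right (k j : ℕ) : pos k (j+1) = 2 ::ₘ pos k j := by
  simp [pos, Multiset.replicate_succ, Multiset.add_cons]

lemma mem_pos {a k j : ℕ} (h : a ∈ pos k j) : a = 1 ∨ a = 2 := by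
  simp [pos, Multiset.mem_replicate] at h
  tauto

lemma one_mem_pos {k j : ℕ} (h : (1:ℕ) ∈ pos k j) : k ≠ 0 := by
  simp [pos, Multiset.mem_replicate] at h
  tauto

lemma two_mem_pos {k j : ℕ} (h : (2:ℕ) ∈ pos k j) : j ≠ 0 := by
  simp [pos, Multiset.mem_replicate] at h
  tauto

lemma one_mem_pos' {k j : ℕ} (hk : k ≠ 0) : (1:ℕ) ∈ pos k j := by
  simp [pos, Multiset.mem_replicate]
  tauto

/-- Characterization of Left moves from `pos k j`. -/
lemma leftMove_pos {k j : ℕ} {G' : Multiset ℕ} (h : LeftMove (pos k j) G') :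
    (∃ k', k = k' + 1 ∧ G' = pos k' j) ∨ (∃ j', j = j' + 1 ∧ G' = pos (k+1) j') := by
  obtain ⟨n, hn, i, hi, hG⟩ := h
  rcases mem_pos hn with rfl | rfl
  · left
    obtain ⟨k', rfl⟩ := Nat.exists_eq_succ_of_ne_zero (one_mem_pos hn)
    refine ⟨k', rfl, ?_⟩
    have hi0 : i = 0 := by omega
    subst hi0
    rw [hG, pos_succ_left]
    simp [addStrip_zero, Multiset.erase_cons_head]
  · right
    obtain ⟨j', rfl⟩ := Nat.exists_eq_succ_of_ne_zero (two_mem_pos hn)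
    refine ⟨j', rfl, ?_⟩
    have herase : (pos k (j'+1)).erase 2 = pos k j' := by
      rw [pos_succ_right, Multiset.erase_cons_head]
    have : i = 0 ∨ i = 1 := by omega
    rcases this with rfl | rfl
    · rw [hG, herase]
      show addStrip (addStrip (pos k j') 0) 1 = pos (k+1) j'
      rw [addStrip_zero, addStrip_one, pos_succ_left]
    · rw [hG, herase]
      show addStrip (addStrip (pos k j') 1) 0 = pos (k+1) j'
      rw [addStrip_one, addStrip_zero, pos_succ_left]

/-- Characterization of Right moves from `pos k j`. -/
lemma rightMove_pos {k j : ℕ} {G' : Multiset ℕ} (h : RightMove (pos k j) G') :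
    ∃ j', j = j' + 1 ∧ G' = pos k j' := by
  obtain ⟨n, hn, i, hi, hG⟩ := h
  rcases mem_pos hn with rfl | rfl
  · omega
  · obtain ⟨j', rfl⟩ := Nat.exists_eq_succ_of_ne_zero (two_mem_pos hn)
    refine ⟨j', rfl, ?_⟩
    have hi0 : i = 0 := by omega
    subst hi0
    rw [hG, pos_succ_right, Multiset.erase_cons_head]
    rfl

/-- If `k ≥ 1`, Left can remove a strip of length 1. -/
lemma leftMove_pos_exists {k j : ℕ} (hk : k ≠ 0) :
    LeftMove (pos k j) (pos (k-1) j) := by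
  obtain ⟨k', rfl⟩ := Nat.exists_eq_succ_of_ne_zero hk
  refine ⟨1, one_mem_pos' (by omega), 0, le_rfl, ?_⟩
  rw [pos_succ_left, Multiset.erase_cons_head]
  rfl

/-- Main induction: if `j < k` Right wins moving second; if `j ≤ k` Right wins moving first. -/
lemma kayles_main : ∀ m k j : ℕ, k + 2 * j ≤ m →
    (j < k → ¬ LeftWinsMover (pos k j)) ∧ (j ≤ k → ¬ LeftWinsWaiter (pos k j)) := by
  intro m
  induction m with
  | zero =>
    intro k j hm
    have hk : k = 0 := by omega
    have hj : j = 0 := by omega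
    subst hk; subst hj
    refine ⟨by omega, fun _ hW => ?_⟩
    cases hW with
    | intro G hex hall =>
      obtain ⟨G', hR⟩ := hex
      obtain ⟨j', hj', _⟩ := rightMove_pos hR
      omega
  | succ m ih =>
    intro k j hm
    constructor
    · intro hk hM
      cases hM with
      | cannot G hno =>
        exact hno ⟨pos (k-1) j, leftMove_pos_exists (by omega)⟩
      | move G G' hL hW =>
        rcases leftMove_pos hL with ⟨k', hk', rfl⟩ | ⟨j', hj', rfl⟩
        · exact (ih k' j (by omega)).2 (by omega) hW
        · exact (ih (k+1) j' (by omega)).2 (by omega) hW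
    · intro hk hW
      cases hW with
      | intro G hex hall =>
        obtain ⟨G', hR⟩ := hex
        obtain ⟨j', hj', rfl⟩ := rightMove_pos hR
        exact (ih k j' (by omega)).1 (by omega) (hall _ hR)

theorem kayles_more_ones_than_twos (k j : ℕ) (h : k > j) :
    outcome (pos k j) = Outcome.R := by
  obtain ⟨hM, hW⟩ := kayles_main (k + 2 * j) k j le_rfl
  simp [outcome, hM h, hW h.le]
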